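/- Let α̃₁, α̃₂ > 0, λ > 0, Y⋆ ∈ (−1,1), set κ = (α̃₁ + α̃₂)/λ, and define on (−1,1) the function f^∞(y) = C₀ (1+y)^{−2 + κ Y⋆/2} (1−y)^{−2 − κ Y⋆/2} exp( − κ (1 − Y⋆ y)/(1 − y²) ) for any constant C₀ > 0. Then f^∞ satisfies, for every y ∈ (−1,1), the zero-flux stationary Fokker–Planck equation (λ/2) d/dy [ (1 − y²)² f^∞(y) ] = (α̃₁ + α̃₂) (Y⋆ − y) f^∞(y); in particular, f^∞ is a stationary solution of the Fokker–Planck equation ∂f/∂τ + ∂/∂y [ (α̃₁ + α̃₂)(Y⋆ − y) f ] = (λ/2) ∂²/∂y² [ (1 − y²)² f ]. -/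

import Mathlib

open Real

lemma fp_aux (κ Ystar C₀ : ℝ) (y : ℝ) (hy1 : -1 < y) (hy2 : y < 1) :
    HasDerivAt (fun z : ℝ =>
      (1 - z ^ 2) ^ 2 *
        (C₀ * (1 + z) ^ (-2 + κ * Ystar / 2)
            * (1 - z) ^ (-2 - κ * Ystar / 2)
            * Real.exp (-κ * (1 - Ystar * z) / (1 - z ^ 2))))
      (2 * κ * (Ystar - y) *
        (C₀ * (1 + y) ^ (-2 + κ * Ystar / 2)
            * (1 - y) ^ (-2 - κ * Ystar / 2)
            * Real.exp (-κ * (1 - Ystar * y) / (1 - y ^ 2)))) y := by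
  have h1p : (0:ℝ) < 1 + y := by linarith
  have h2p : (0:ℝ) < 1 - y := by linarith
  have hdp : (0:ℝ) < 1 - y ^ 2 := by nlinarith
  have hdne : (1:ℝ) - y ^ 2 ≠ 0 := ne_of_gt hdp
  set a : ℝ := κ * Ystar / 2 with ha
  -- the simplified form
  set s : ℝ → ℝ := fun z =>
    C₀ * (1 + z) ^ a * (1 - z) ^ (-a) * Real.exp (-κ * (1 - Ystar * z) / (1 - z ^ 2)) with hs
  -- derivative pieces
  have H1 : HasDerivAt (fun z : ℝ => 1 + z) 1 y := by
    simpa using (hasDerivAt_id y).const_add 1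
  have H2 : HasDerivAt (fun z : ℝ => 1 - z) (-1) y := by
    simpa using (hasDerivAt_id y).const_sub 1
  have H1p : HasDerivAt (fun z : ℝ => (1 + z) ^ a) (1 * a * (1 + y) ^ (a - 1)) y :=
    H1.rpow_const (Or.inl (ne_of_gt h1p))
  have H2p : HasDerivAt (fun z : ℝ => (1 - z) ^ (-a)) ((-1) * (-a) * (1 - y) ^ (-a - 1)) y :=
    H2.rpow_const (Or.inl (ne_of_gt h2p))
  have Hn : HasDerivAt (fun z : ℝ => -κ * (1 - Ystar * z)) (-κ * (-Ystar)) y := by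
    have : HasDerivAt (fun z : ℝ => 1 - Ystar * z) (-Ystar) y := by
      simpa using ((hasDerivAt_id y).const_mul Ystar).const_sub 1
    simpa [mul_comm] using this.const_mul (-κ)
  have Hd : HasDerivAt (fun z : ℝ => 1 - z ^ 2) (-(2 * y)) y := by
    simpa using (hasDerivAt_pow 2 y).const_sub 1
  have Hu : HasDerivAt (fun z : ℝ => -κ * (1 - Ystar * z) / (1 - z ^ 2))
      ((-κ * (-Ystar) * (1 - y ^ 2) - -κ * (1 - Ystar * y) * (-(2 * y))) / (1 - y ^ 2) ^ 2) y :=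
    Hn.div Hd hdne
  have He := Hu.exp
  have Hs : HasDerivAt s
      ((C₀ * (1 * a * (1 + y) ^ (a - 1)) * (1 - y) ^ (-a)
          + C₀ * (1 + y) ^ a * ((-1) * (-a) * (1 - y) ^ (-a - 1)))
          * Real.exp (-κ * (1 - Ystar * y) / (1 - y ^ 2))
        + C₀ * (1 + y) ^ a * (1 - y) ^ (-a)
          * (Real.exp (-κ * (1 - Ystar * y) / (1 - y ^ 2))
              * ((-κ * (-Ystar) * (1 - y ^ 2) - -κ * (1 - Ystar * y) * (-(2 * y))) / (1 - y ^ 2) ^ 2))) y := by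
    exact ((H1p.const_mul C₀).mul H2p).mul He
  -- eventual equality of the original function with s
  have heq : (fun z : ℝ =>
      (1 - z ^ 2) ^ 2 *
        (C₀ * (1 + z) ^ (-2 + a) * (1 - z) ^ (-2 - a)
            * Real.exp (-κ * (1 - Ystar * z) / (1 - z ^ 2)))) =ᶠ[nhds y] s := by
    have hmem : Set.Ioo (-1 : ℝ) 1 ∈ nhds y := isOpen_Ioo.mem_nhds ⟨hy1, hy2⟩
    filter_upwards [hmem] with z hz
    have hz1 : (0:ℝ) < 1 + z := by linarith [hz.1]
    have hz2 : (0:ℝ) < 1 - z := by linarith [hz.2]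
    have e1 : (1 + z) ^ a = (1 + z) ^ (-2 + a) * (1 + z) ^ (2:ℝ) := by
      rw [← Real.rpow_add hz1]; ring_nf
    have e2 : (1 - z) ^ (-a) = (1 - z) ^ (-2 - a) * (1 - z) ^ (2:ℝ) := by
      rw [← Real.rpow_add hz2]; ring_nf
    have e3 : (1 + z) ^ (2:ℝ) = (1 + z) ^ (2:ℕ) := by
      rw [← Real.rpow_natCast (1 + z) 2]; norm_num
    have e4 : (1 - z) ^ (2:ℝ) = (1 - z) ^ (2:ℕ) := by
      rw [← Real.rpow_natCast (1 - z) 2]; norm_num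
    have e5 : (1 - z ^ 2) ^ 2 = (1 + z) ^ (2:ℕ) * (1 - z) ^ (2:ℕ) := by ring
    simp only [hs, e1, e2, e3, e4, e5]
    ring
  -- transfer derivative and fix the value
  have Hg := Hs.congr_of_eventuallyEq heq
  refine Hg.congr_deriv ?_
  -- algebraic identity for the derivative value
  have e1 : (1 + y) ^ (a - 1) = (1 + y) ^ a / (1 + y) := by
    rw [Real.rpow_sub h1p, Real.rpow_one]
  have e2 : (1 - y) ^ (-a - 1) = (1 - y) ^ (-a) / (1 - y) := by
    rw [Real.rpow_sub h2p, Real.rpow_one]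
  have e3 : (1 + y) ^ (-2 + a) = (1 + y) ^ a / (1 + y) ^ (2:ℕ) := by
    rw [eq_div_iff (by positivity), ← Real.rpow_natCast (1+y) 2, ← Real.rpow_add h1p]
    ring_nf
  have e4 : (1 - y) ^ (-2 - a) = (1 - y) ^ (-a) / (1 - y) ^ (2:ℕ) := by
    rw [eq_div_iff (by positivity), ← Real.rpow_natCast (1-y) 2, ← Real.rpow_add h2p]
    ring_nf
  rw [e1, e2, e3, e4]
  have h1ne : (1:ℝ) + y ≠ 0 := ne_of_gt h1p
  have h2ne : (1:ℝ) - y ≠ 0 := ne_of_gt h2p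
  have ha' : a = κ * Ystar / 2 := ha
  field_simp
  ring_nf
  rw [ha']; ring

/-- The explicit stationary state of the chartist Fokker–Planck equation with
diffusion D(y) = 1 − y² satisfies the zero-flux relation
(λ/2) d/dy[(1−y²)² f^∞] = (α̃₁+α̃₂)(Y⋆−y) f^∞ on (−1,1); in particular it is a
stationary solution of ∂f/∂τ + ∂_y[(α̃₁+α̃₂)(Y⋆−y)f] = (λ/2)∂²_y[(1−y²)²f]. -/
theorem stmt_11 (a₁ a₂ lam Ystar C₀ : ℝ)
    (ha₁ : 0 < a₁) (ha₂ : 0 < a₂) (hlam : 0 < lam)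
    (hY : Ystar ∈ Set.Ioo (-1 : ℝ) 1) (hC₀ : 0 < C₀) :
    ∀ y ∈ Set.Ioo (-1 : ℝ) 1,
      (lam / 2) *
          deriv (fun z : ℝ =>
            (1 - z ^ 2) ^ 2 *
              (C₀ * (1 + z) ^ (-2 + (a₁ + a₂) / lam * Ystar / 2)
                  * (1 - z) ^ (-2 - (a₁ + a₂) / lam * Ystar / 2)
                  * Real.exp (-((a₁ + a₂) / lam) * (1 - Ystar * z) / (1 - z ^ 2)))) y
        = (a₁ + a₂) * (Ystar - y) *
            (C₀ * (1 + y) ^ (-2 + (a₁ + a₂) / lam * Ystar / 2)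
                * (1 - y) ^ (-2 - (a₁ + a₂) / lam * Ystar / 2)
                * Real.exp (-((a₁ + a₂) / lam) * (1 - Ystar * y) / (1 - y ^ 2)))
      ∧ deriv (fun z : ℝ =>
            (a₁ + a₂) * (Ystar - z) *
              (C₀ * (1 + z) ^ (-2 + (a₁ + a₂) / lam * Ystar / 2)
                  * (1 - z) ^ (-2 - (a₁ + a₂) / lam * Ystar / 2)
                  * Real.exp (-((a₁ + a₂) / lam) * (1 - Ystar * z) / (1 - z ^ 2)))) y
        = (lam / 2) *
            deriv (deriv (fun z : ℝ =>
              (1 - z ^ 2) ^ 2 *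
                (C₀ * (1 + z) ^ (-2 + (a₁ + a₂) / lam * Ystar / 2)
                    * (1 - z) ^ (-2 - (a₁ + a₂) / lam * Ystar / 2)
                    * Real.exp (-((a₁ + a₂) / lam) * (1 - Ystar * z) / (1 - z ^ 2))))) y := by
  have hlne : lam ≠ 0 := ne_of_gt hlam
  set κ : ℝ := (a₁ + a₂) / lam with hκ
  set f : ℝ → ℝ := fun z =>
    C₀ * (1 + z) ^ (-2 + κ * Ystar / 2) * (1 - z) ^ (-2 - κ * Ystar / 2)
      * Real.exp (-κ * (1 - Ystar * z) / (1 - z ^ 2)) with hf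
  set g : ℝ → ℝ := fun z => (1 - z ^ 2) ^ 2 * f z with hg
  -- derivative of g at every point of Ioo
  have key : ∀ z ∈ Set.Ioo (-1 : ℝ) 1, deriv g z = 2 * κ * (Ystar - z) * f z := by
    intro z hz
    exact (fp_aux κ Ystar C₀ z hz.1 hz.2).deriv
  have hκl : lam * κ = a₁ + a₂ := by rw [hκ]; field_simp
  intro y hy
  constructor
  · rw [key y hy]
    have : lam / 2 * (2 * κ * (Ystar - y) * f y) = (lam * κ) * ((Ystar - y) * f y) := by ring
    rw [this, hκl]; ring
  · have heq : deriv g =ᶠ[nhds y] fun z => 2 * κ * (Ystar - z) * f z := by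
      filter_upwards [isOpen_Ioo.mem_nhds hy] with z hz using key z hz
    have h2 : deriv (deriv g) y = deriv (fun z => 2 * κ * (Ystar - z) * f z) y :=
      Filter.EventuallyEq.deriv_eq heq
    have h3 : (fun z => (a₁ + a₂) * (Ystar - z) * f z)
        = fun z => (lam / 2) * (2 * κ * (Ystar - z) * f z) := by
      funext z
      rw [show lam / 2 * (2 * κ * (Ystar - z) * f z) = (lam * κ) * ((Ystar - z) * f z) by ring,
        hκl]
      ring
    calc deriv (fun z => (a₁ + a₂) * (Ystar - z) * f z) y
        = deriv (fun z => (lam / 2) * (2 * κ * (Ystar - z) * f z)) y := by rw [h3]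
      _ = (lam / 2) * deriv (fun z => 2 * κ * (Ystar - z) * f z) y :=
          deriv_const_mul_field _
      _ = (lam / 2) * deriv (deriv g) y := by rw [h2]
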